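/- For every real q with 0 < q < 1 and every real x satisfying (1−q)|x| < 1, both series below converge absolutely and one has Σ_{k=0}^∞ (1−q)^k x^k / (q;q)_k = exp( Σ_{k=1}^∞ (1−q)^k x^k / (k(1−q^k)) ). -/

import Mathlib

set_option maxHeartbeats 1000000


/-- The finite q-Pochhammer product `(q;q)_k = (1-q)(1-q^2)⋯(1-q^k)`, with `(q;q)_0 = 1`. -/
noncomputable def qPoch (q : ℝ) (k : ℕ) : ℝ := ∏ i ∈ Finset.range k, (1 - q ^ (i + 1))

namespace QExpAux

variable {q : ℝ} (hq0 : 0 < q) (hq1 : q < 1)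
include hq0 hq1

lemma qPow_lt_one (k : ℕ) : q ^ (k + 1) < 1 :=
  pow_lt_one₀ hq0.le hq1 (Nat.succ_ne_zero k)

lemma qPow_le (k : ℕ) : q ^ (k + 1) ≤ q := by
  calc q ^ (k + 1) ≤ q ^ 1 :=
        pow_le_pow_of_le_one hq0.le hq1.le (Nat.one_le_iff_ne_zero.2 (Nat.succ_ne_zero k))
    _ = q := pow_one q

lemma qPoch_pos (k : ℕ) : 0 < qPoch q k :=
  Finset.prod_pos fun i _ => by linarith [qPow_lt_one hq0 hq1 i]

omit hq0 hq1 in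
lemma qPoch_succ (k : ℕ) : qPoch q (k + 1) = qPoch q k * (1 - q ^ (k + 1)) :=
  Finset.prod_range_succ _ _

omit hq0 hq1 in
lemma qPoch_zero : qPoch q 0 = 1 := by simp [qPoch]

lemma qPoch_ge (k : ℕ) : (1 - q) ^ k ≤ qPoch q k := by
  have : (1 - q) ^ k = ∏ _i ∈ Finset.range k, (1 - q) := by
    rw [Finset.prod_const, Finset.card_range]
  rw [this]
  exact Finset.prod_le_prod (fun i _ => by linarith) (fun i _ => by linarith [qPow_le hq0 hq1 i])

lemma abs_qt_lt {t : ℝ} (ht : |t| < 1) : |q * t| < 1 := by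
  rw [abs_mul, abs_of_pos hq0]
  calc q * |t| ≤ 1 * |t| := mul_le_mul_of_nonneg_right hq1.le (abs_nonneg t)
    _ = |t| := one_mul _
    _ < 1 := ht

/-- absolute summability of the q-exponential series -/
lemma sumF_abs {t : ℝ} (ht : |t| < 1) :
    Summable fun k : ℕ => |t ^ k / qPoch q k| := by
  have hr : (|t| + 1) / 2 < 1 := by linarith
  refine summable_of_ratio_norm_eventually_le hr ?_
  have hq' : Filter.Tendsto (fun k : ℕ => q ^ (k + 1)) Filter.atTop (nhds 0) :=
    (tendsto_pow_atTop_nhds_zero_of_lt_one hq0.le hq1).comp (Filter.tendsto_add_atTop_nat 1)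
  have hev : ∀ᶠ k : ℕ in Filter.atTop, q ^ (k + 1) ≤ 1 - |t| / ((|t| + 1) / 2) := by
    have hpos : 0 < 1 - |t| / ((|t| + 1) / 2) := by
      have : |t| / ((|t| + 1) / 2) < 1 := by
        rw [div_lt_one (by positivity)]
        linarith
      linarith
    exact Filter.Tendsto.eventually_le_const hpos hq'
  filter_upwards [hev] with k hk
  have hqp := qPoch_pos hq0 hq1 k
  have h1 : (0:ℝ) < 1 - q ^ (k + 1) := by linarith [qPow_lt_one hq0 hq1 k]
  rw [Real.norm_eq_abs, Real.norm_eq_abs, abs_abs, abs_abs, qPoch_succ,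
    abs_div, abs_div, pow_succ, abs_mul]
  rw [abs_of_pos hqp, abs_of_pos (mul_pos hqp h1)]
  rw [div_le_iff₀ (mul_pos hqp h1)]
  have key : |t| ≤ (|t| + 1) / 2 * (1 - q ^ (k + 1)) := by
    have h2 : |t| / ((|t| + 1) / 2) ≤ 1 - q ^ (k + 1) := by linarith
    calc |t| = (|t| + 1) / 2 * (|t| / ((|t| + 1) / 2)) := by field_simp
      _ ≤ (|t| + 1) / 2 * (1 - q ^ (k + 1)) :=
          mul_le_mul_of_nonneg_left h2 (by positivity)
  calc |t ^ k| * |t| ≤ |t ^ k| * ((|t| + 1) / 2 * (1 - q ^ (k + 1))) :=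
        mul_le_mul_of_nonneg_left key (abs_nonneg _)
    _ = (|t| + 1) / 2 * (|t ^ k| / qPoch q k) * (qPoch q k * (1 - q ^ (k + 1))) := by
        field_simp

lemma sumF {t : ℝ} (ht : |t| < 1) : Summable fun k : ℕ => t ^ k / qPoch q k :=
  (sumF_abs hq0 hq1 ht).of_abs

/-- absolute summability of the log series -/
lemma sumS_abs {t : ℝ} (ht : |t| < 1) :
    Summable fun k : ℕ => |t ^ (k + 1) / (((k : ℝ) + 1) * (1 - q ^ (k + 1)))| := by
  have hbd : ∀ k : ℕ, |t ^ (k + 1) / (((k : ℝ) + 1) * (1 - q ^ (k + 1)))|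
      ≤ (1 / (1 - q)) * (|t| * |t| ^ k) := by
    intro k
    have h1 : (0:ℝ) < 1 - q ^ (k + 1) := by linarith [qPow_lt_one hq0 hq1 k]
    have hk1 : (1:ℝ) ≤ (k : ℝ) + 1 := by
      have : (0:ℝ) ≤ (k:ℝ) := Nat.cast_nonneg k
      linarith
    rw [abs_div, abs_of_pos (by positivity : (0:ℝ) < ((k:ℝ)+1) * (1 - q ^ (k+1)))]
    rw [div_le_iff₀ (by positivity)]
    have hle : 1 - q ≤ ((k:ℝ) + 1) * (1 - q ^ (k + 1)) := by
      have : q ^ (k + 1) ≤ q := qPow_le hq0 hq1 k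
      nlinarith
    have h1q : (0:ℝ) < 1 - q := by linarith
    calc |t ^ (k + 1)| = |t| * |t| ^ k := by rw [abs_pow, pow_succ]; ring
      _ = (1 / (1 - q)) * (|t| * |t| ^ k) * (1 - q) := by
          field_simp
      _ ≤ (1 / (1 - q)) * (|t| * |t| ^ k) * (((k:ℝ) + 1) * (1 - q ^ (k + 1))) := by
          exact mul_le_mul_of_nonneg_left hle
            (mul_nonneg (one_div_nonneg.2 h1q.le) (by positivity))
  refine Summable.of_nonneg_of_le (fun k => abs_nonneg _) hbd ?_
  exact ((summable_geometric_of_lt_one (abs_nonneg t) ht).mul_left |t|).mul_left _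

lemma sumS {t : ℝ} (ht : |t| < 1) :
    Summable fun k : ℕ => t ^ (k + 1) / (((k : ℝ) + 1) * (1 - q ^ (k + 1))) :=
  (sumS_abs hq0 hq1 ht).of_abs

end QExpAux

noncomputable def Fq (q t : ℝ) : ℝ := ∑' k : ℕ, t ^ k / qPoch q k
noncomputable def Sq (q t : ℝ) : ℝ :=
  ∑' k : ℕ, t ^ (k + 1) / (((k : ℝ) + 1) * (1 - q ^ (k + 1)))

namespace QExpAux

variable {q : ℝ} (hq0 : 0 < q) (hq1 : q < 1)
include hq0 hq1

lemma feq {t : ℝ} (ht : |t| < 1) : (1 - t) * Fq q t = Fq q (q * t) := by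
  have hF := sumF hq0 hq1 ht
  have hFq := sumF hq0 hq1 (abs_qt_lt hq0 hq1 ht)
  have hterm : ∀ k : ℕ,
      t ^ (k+1) / qPoch q (k+1) - (q*t) ^ (k+1) / qPoch q (k+1) = t * (t ^ k / qPoch q k) := by
    intro k
    have h1 : (0:ℝ) < 1 - q ^ (k + 1) := by linarith [qPow_lt_one hq0 hq1 k]
    have hp := qPoch_pos hq0 hq1 k
    rw [qPoch_succ, mul_pow]
    field_simp
    ring
  have key : Fq q t - Fq q (q * t) = t * Fq q t := by
    have hsub : Fq q t - Fq q (q * t)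
        = ∑' k : ℕ, (t ^ k / qPoch q k - (q * t) ^ k / qPoch q k) := (Summable.tsum_sub hF hFq).symm
    rw [hsub, Summable.tsum_eq_zero_add (hF.sub hFq)]
    simp only [pow_zero, sub_self, zero_add]
    rw [tsum_congr hterm, tsum_mul_left]
    rfl
  linear_combination key

lemma seq {t : ℝ} (ht : |t| < 1) : Sq q t - Sq q (q * t) = -Real.log (1 - t) := by
  have hS := sumS hq0 hq1 ht
  have hSq := sumS hq0 hq1 (abs_qt_lt hq0 hq1 ht)
  have hterm : ∀ k : ℕ,
      t ^ (k+1) / (((k:ℝ)+1) * (1 - q ^ (k+1))) - (q*t) ^ (k+1) / (((k:ℝ)+1) * (1 - q ^ (k+1)))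
        = t ^ (k+1) / ((k:ℝ)+1) := by
    intro k
    have h1 : (0:ℝ) < 1 - q ^ (k + 1) := by linarith [qPow_lt_one hq0 hq1 k]
    have hk1 : (0:ℝ) < (k : ℝ) + 1 := by positivity
    rw [mul_pow]
    field_simp
  have hsub : Sq q t - Sq q (q * t)
      = ∑' k : ℕ, (t ^ (k+1) / (((k:ℝ)+1) * (1 - q ^ (k+1)))
          - (q*t) ^ (k+1) / (((k:ℝ)+1) * (1 - q ^ (k+1)))) := (Summable.tsum_sub hS hSq).symm
  rw [hsub, tsum_congr hterm]
  exact (Real.hasSum_pow_div_log_of_abs_lt_one ht).tsum_eq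

lemma geq {t : ℝ} (ht : |t| < 1) :
    (1 - t) * Real.exp (Sq q t) = Real.exp (Sq q (q * t)) := by
  have h1 : (0:ℝ) < 1 - t := by
    have := abs_lt.1 ht
    linarith [this.2]
  have hs := seq hq0 hq1 ht
  have : Sq q (q * t) = Sq q t + Real.log (1 - t) := by linarith
  rw [this, Real.exp_add, Real.exp_log h1]
  ring

lemma abs_qnt_lt {t : ℝ} (ht : |t| < 1) (n : ℕ) : |q ^ n * t| < 1 := by
  rw [abs_mul, abs_of_pos (pow_pos hq0 n)]
  calc q ^ n * |t| ≤ 1 * |t| :=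
        mul_le_mul_of_nonneg_right (pow_le_one₀ hq0.le hq1.le) (abs_nonneg t)
    _ = |t| := one_mul _
    _ < 1 := ht

lemma iter {t : ℝ} (ht : |t| < 1) (n : ℕ) :
    Fq q t * Real.exp (Sq q (q ^ n * t)) = Real.exp (Sq q t) * Fq q (q ^ n * t) := by
  induction n with
  | zero => simp [mul_comm]
  | succ n ih =>
    have hs : |q ^ n * t| < 1 := abs_qnt_lt hq0 hq1 ht n
    have hrw : q ^ (n + 1) * t = q * (q ^ n * t) := by ring
    have hf := feq hq0 hq1 hs
    have hg := geq hq0 hq1 hs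
    rw [hrw]
    linear_combination (-(Fq q t)) * hg + Real.exp (Sq q t) * hf + (1 - q ^ n * t) * ih

lemma F_near_one {s : ℝ} (hs : |s| ≤ (1 - q) / 2) :
    |Fq q s - 1| ≤ 2 * |s| / (1 - q) := by
  have h1q : (0:ℝ) < 1 - q := by linarith
  have hs1 : |s| < 1 := by linarith [abs_nonneg s]
  have hu0 : 0 ≤ |s| / (1 - q) := div_nonneg (abs_nonneg s) h1q.le
  have hu2 : |s| / (1 - q) ≤ 1 / 2 := by
    rw [div_le_div_iff₀ h1q (by norm_num)]
    linarith
  have hF := sumF hq0 hq1 hs1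
  have hshift : Summable fun k : ℕ => s ^ (k + 1) / qPoch q (k + 1) :=
    (summable_nat_add_iff 1).2 hF
  have heq : Fq q s - 1 = ∑' k : ℕ, s ^ (k + 1) / qPoch q (k + 1) := by
    have h0 := Summable.tsum_eq_zero_add hF
    rw [pow_zero, qPoch_zero] at h0
    have h1 : Fq q s = 1 + ∑' k : ℕ, s ^ (k + 1) / qPoch q (k + 1) := by
      rw [Fq, h0]; norm_num
    linarith
  have hbd : ∀ k : ℕ, |s ^ (k + 1) / qPoch q (k + 1)| ≤ (|s| / (1 - q)) ^ (k + 1) := by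
    intro k
    have hp := qPoch_pos hq0 hq1 (k + 1)
    have hg : (1 - q) ^ (k + 1) ≤ qPoch q (k + 1) := qPoch_ge hq0 hq1 (k + 1)
    rw [abs_div, abs_of_pos hp, div_pow, abs_pow]
    exact div_le_div_of_nonneg_left (by positivity) (by positivity) hg
  have hgeo : Summable fun k : ℕ => (|s| / (1 - q)) ^ (k + 1) :=
    (summable_nat_add_iff 1).2 (summable_geometric_of_lt_one hu0 (by linarith))
  have habs : Summable fun k : ℕ => |s ^ (k + 1) / qPoch q (k + 1)| :=
    Summable.of_nonneg_of_le (fun k => abs_nonneg _) hbd hgeo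
  have hnorm : |∑' k : ℕ, s ^ (k + 1) / qPoch q (k + 1)|
      ≤ ∑' k : ℕ, |s ^ (k + 1) / qPoch q (k + 1)| := by
    have h := norm_tsum_le_tsum_norm (f := fun k : ℕ => s ^ (k + 1) / qPoch q (k + 1))
      (by simp only [Real.norm_eq_abs]; exact habs)
    simp only [Real.norm_eq_abs] at h
    exact h
  calc |Fq q s - 1| ≤ ∑' k : ℕ, |s ^ (k + 1) / qPoch q (k + 1)| := by rw [heq]; exact hnorm
    _ ≤ ∑' k : ℕ, (|s| / (1 - q)) ^ (k + 1) := Summable.tsum_le_tsum hbd habs hgeo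
    _ = (|s| / (1 - q)) * (1 - |s| / (1 - q))⁻¹ := by
        have h : ∀ k : ℕ, (|s| / (1 - q)) ^ (k + 1)
            = (|s| / (1 - q)) * (|s| / (1 - q)) ^ k := fun k => by rw [pow_succ]; ring
        rw [tsum_congr h, tsum_mul_left, tsum_geometric_of_lt_one hu0 (by linarith)]
    _ ≤ (|s| / (1 - q)) * 2 := by
        refine mul_le_mul_of_nonneg_left ?_ hu0
        rw [inv_le_comm₀ (by linarith) (by norm_num)]
        linarith
    _ = 2 * |s| / (1 - q) := by ring

lemma S_near_zero {s : ℝ} (hs : |s| ≤ 1 / 2) :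
    |Sq q s| ≤ 2 * |s| / (1 - q) := by
  have hs1 : |s| < 1 := by linarith
  have hS := sumS hq0 hq1 hs1
  have habs := sumS_abs hq0 hq1 hs1
  have hbd : ∀ k : ℕ, |s ^ (k + 1) / (((k:ℝ) + 1) * (1 - q ^ (k + 1)))|
      ≤ (1 / (1 - q)) * (|s| * |s| ^ k) := by
    intro k
    have h1 : (0:ℝ) < 1 - q ^ (k + 1) := by linarith [qPow_lt_one hq0 hq1 k]
    have hk1 : (1:ℝ) ≤ (k : ℝ) + 1 := by
      have : (0:ℝ) ≤ (k:ℝ) := Nat.cast_nonneg k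
      linarith
    rw [abs_div, abs_of_pos (by positivity : (0:ℝ) < ((k:ℝ)+1) * (1 - q ^ (k+1)))]
    rw [div_le_iff₀ (by positivity)]
    have hle : 1 - q ≤ ((k:ℝ) + 1) * (1 - q ^ (k + 1)) := by
      have := qPow_le hq0 hq1 k
      nlinarith
    have h1q : (0:ℝ) < 1 - q := by linarith
    calc |s ^ (k + 1)| = |s| * |s| ^ k := by rw [abs_pow, pow_succ]; ring
      _ = (1 / (1 - q)) * (|s| * |s| ^ k) * (1 - q) := by
          field_simp
      _ ≤ (1 / (1 - q)) * (|s| * |s| ^ k) * (((k:ℝ) + 1) * (1 - q ^ (k + 1))) := by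
          exact mul_le_mul_of_nonneg_left hle
            (mul_nonneg (one_div_nonneg.2 h1q.le) (by positivity))
  have hgeo : Summable fun k : ℕ => (1 / (1 - q)) * (|s| * |s| ^ k) :=
    ((summable_geometric_of_lt_one (abs_nonneg s) hs1).mul_left |s|).mul_left _
  have h1q : (0:ℝ) < 1 - q := by linarith
  have hnorm : |∑' k : ℕ, s ^ (k + 1) / (((k:ℝ) + 1) * (1 - q ^ (k + 1)))|
      ≤ ∑' k : ℕ, |s ^ (k + 1) / (((k:ℝ) + 1) * (1 - q ^ (k + 1)))| := by
    have h := norm_tsum_le_tsum_norm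
      (f := fun k : ℕ => s ^ (k + 1) / (((k:ℝ) + 1) * (1 - q ^ (k + 1))))
      (by simp only [Real.norm_eq_abs]; exact habs)
    simp only [Real.norm_eq_abs] at h
    exact h
  calc |Sq q s| ≤ ∑' k : ℕ, |s ^ (k + 1) / (((k:ℝ) + 1) * (1 - q ^ (k + 1)))| := by
        rw [Sq]; exact hnorm
    _ ≤ ∑' k : ℕ, (1 / (1 - q)) * (|s| * |s| ^ k) := Summable.tsum_le_tsum hbd habs hgeo
    _ = (1 / (1 - q)) * (|s| * (1 - |s|)⁻¹) := by
        rw [tsum_mul_left, tsum_mul_left, tsum_geometric_of_lt_one (abs_nonneg s) hs1]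
    _ ≤ (1 / (1 - q)) * (|s| * 2) := by
        apply mul_le_mul_of_nonneg_left _ (one_div_nonneg.2 h1q.le)
        apply mul_le_mul_of_nonneg_left _ (abs_nonneg s)
        rw [inv_le_comm₀ (by linarith) (by norm_num)]
        linarith
    _ = 2 * |s| / (1 - q) := by ring

lemma tendsto_qnt (t : ℝ) :
    Filter.Tendsto (fun n : ℕ => q ^ n * t) Filter.atTop (nhds 0) := by
  have := (tendsto_pow_atTop_nhds_zero_of_lt_one hq0.le hq1).mul_const t
  simpa using this

lemma main_eq {t : ℝ} (ht : |t| < 1) : Fq q t = Real.exp (Sq q t) := by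
  have habs : Filter.Tendsto (fun n : ℕ => |q ^ n * t|) Filter.atTop (nhds 0) := by
    have := (tendsto_qnt hq0 hq1 t).abs
    simpa using this
  -- F (q^n t) → 1
  have hFlim : Filter.Tendsto (fun n : ℕ => Fq q (q ^ n * t)) Filter.atTop (nhds 1) := by
    have hev : ∀ᶠ n : ℕ in Filter.atTop,
        |Fq q (q ^ n * t) - 1| ≤ 2 * |q ^ n * t| / (1 - q) := by
      filter_upwards [habs.eventually_le_const (by linarith : (0:ℝ) < (1 - q) / 2)]
        with n hn
      exact F_near_one hq0 hq1 hn
    have hup : Filter.Tendsto (fun n : ℕ => 2 * |q ^ n * t| / (1 - q)) Filter.atTop (nhds 0) := by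
      have := (habs.const_mul 2).div_const (1 - q)
      simpa using this
    have h0 : Filter.Tendsto (fun n : ℕ => Fq q (q ^ n * t) - 1) Filter.atTop (nhds 0) := by
      rw [tendsto_zero_iff_abs_tendsto_zero]
      exact squeeze_zero' (Filter.Eventually.of_forall fun n => abs_nonneg _) hev hup
    have := h0.add_const 1
    simpa using this
  -- S (q^n t) → 0
  have hSlim : Filter.Tendsto (fun n : ℕ => Sq q (q ^ n * t)) Filter.atTop (nhds 0) := by
    have hev : ∀ᶠ n : ℕ in Filter.atTop,
        |Sq q (q ^ n * t)| ≤ 2 * |q ^ n * t| / (1 - q) := by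
      filter_upwards [habs.eventually_le_const (by norm_num : (0:ℝ) < 1 / 2)] with n hn
      exact S_near_zero hq0 hq1 hn
    have hup : Filter.Tendsto (fun n : ℕ => 2 * |q ^ n * t| / (1 - q)) Filter.atTop (nhds 0) := by
      have := (habs.const_mul 2).div_const (1 - q)
      simpa using this
    rw [tendsto_zero_iff_abs_tendsto_zero]
    exact squeeze_zero' (Filter.Eventually.of_forall fun n => abs_nonneg _) hev hup
  have hElim : Filter.Tendsto (fun n : ℕ => Real.exp (Sq q (q ^ n * t)))
      Filter.atTop (nhds 1) := by
    have := (Real.continuous_exp.tendsto 0).comp hSlim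
    simpa [Function.comp_def] using this
  have h1 : Filter.Tendsto (fun n : ℕ => Fq q t * Real.exp (Sq q (q ^ n * t)))
      Filter.atTop (nhds (Fq q t)) := by
    have := hElim.const_mul (Fq q t)
    simpa using this
  have h2 : Filter.Tendsto (fun n : ℕ => Fq q t * Real.exp (Sq q (q ^ n * t)))
      Filter.atTop (nhds (Real.exp (Sq q t))) := by
    have h2' : Filter.Tendsto (fun n : ℕ => Real.exp (Sq q t) * Fq q (q ^ n * t))
        Filter.atTop (nhds (Real.exp (Sq q t))) := by
      have := hFlim.const_mul (Real.exp (Sq q t))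
      simpa using this
    have : (fun n : ℕ => Fq q t * Real.exp (Sq q (q ^ n * t)))
        = fun n : ℕ => Real.exp (Sq q t) * Fq q (q ^ n * t) :=
      funext fun n => iter hq0 hq1 ht n
    rwa [this]
  exact tendsto_nhds_unique h1 h2

end QExpAux

/-- Identity (2.2): for `0 < q < 1` and `(1-q)|x| < 1`, the q-exponential series
`Σ (1-q)^k x^k/(q;q)_k` and the series `Σ_{k≥1} (1-q)^k x^k/(k(1-q^k))` both converge
absolutely, and the first equals the exponential of the second. -/
theorem qExp_eq_exp_of_series (q x : ℝ) (hq0 : 0 < q) (hq1 : q < 1)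
    (hx : (1 - q) * |x| < 1) :
    Summable (fun k : ℕ => |(1 - q) ^ k * x ^ k / qPoch q k|) ∧
    Summable (fun k : ℕ =>
      |(1 - q) ^ (k + 1) * x ^ (k + 1) / (((k : ℝ) + 1) * (1 - q ^ (k + 1)))|) ∧
    ∑' k : ℕ, (1 - q) ^ k * x ^ k / qPoch q k =
      Real.exp (∑' k : ℕ,
        (1 - q) ^ (k + 1) * x ^ (k + 1) / (((k : ℝ) + 1) * (1 - q ^ (k + 1)))) := by
  set t := (1 - q) * x with htdef
  have ht : |t| < 1 := by
    rw [htdef, abs_mul, abs_of_pos (by linarith : (0:ℝ) < 1 - q)]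
    exact hx
  have hpow : ∀ k : ℕ, (1 - q) ^ k * x ^ k = t ^ k := fun k => (mul_pow _ _ _).symm
  refine ⟨?_, ?_, ?_⟩
  · have := QExpAux.sumF_abs hq0 hq1 ht
    simpa only [hpow] using this
  · have := QExpAux.sumS_abs hq0 hq1 ht
    simpa only [hpow] using this
  · have := QExpAux.main_eq hq0 hq1 ht
    simp only [Fq, Sq] at this
    simpa only [hpow] using this
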